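/- Assume d1 = d2, and suppose there are constants δ, Δ, L > 0 and ρ, β ≥ 0 such that for every x ∈ ℝ^d: every singular value of the cross-derivative block ∇²_{x1,x2} g(x) lies in [δ, Δ] (in particular this square matrix is invertible); the spectral norms of the symmetric blocks ∇²_{x1,x1} g(x) and ∇²_{x2,x2} g(x) are at most L; and λ_min((∇²_{x1,x1} g(x))²) ≥ ρ² and λ_min((∇²_{x2,x2} g(x))²) ≥ β². If the 'sufficiently bilinear' condition (δ² + ρ²)(δ² + β²) − 4L²Δ² > 0 holds, then the Hamiltonian satisfies the Polyak–Łojasiewicz inequality ½‖∇H(x)‖² ≥ μ_H · H(x) for all x ∈ ℝ^d, with μ_H = ((δ² + ρ²)(δ² + β²) − 4L²Δ²)/(2δ² + ρ² + β²). -/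

import Mathlib

/-!
STATEMENT 3: d1 = d2 = d; if all singular values of the cross block ∇²_{x1,x2}g lie in
[δ, Δ], the diagonal Hessian blocks have spectral norm ≤ L, λ_min of their squares are
≥ ρ², β², and (δ²+ρ²)(δ²+β²) − 4L²Δ² > 0, then the Hamiltonian H = ½‖ξ‖² satisfies the
PL inequality ½‖∇H(x)‖² ≥ μ_H H(x) with μ_H = ((δ²+ρ²)(δ²+β²) − 4L²Δ²)/(2δ²+ρ²+β²).
-/

open scoped RealInnerProductSpace BigOperators

noncomputable section

variable {d : ℕ}

/-- The signed gradient field ξ(x) = (∇_{x1} g(x), −∇_{x2} g(x)). -/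
def xi (g : EuclideanSpace ℝ (Fin d ⊕ Fin d) → ℝ)
    (x : EuclideanSpace ℝ (Fin d ⊕ Fin d)) : EuclideanSpace ℝ (Fin d ⊕ Fin d) :=
  (WithLp.equiv 2 _).symm (Sum.elim
    (fun a => gradient g x (Sum.inl a))
    (fun j => -(gradient g x (Sum.inr j))))

/-- The Hamiltonian H(x) = ½‖ξ(x)‖². -/
def Ham (g : EuclideanSpace ℝ (Fin d ⊕ Fin d) → ℝ)
    (x : EuclideanSpace ℝ (Fin d ⊕ Fin d)) : ℝ :=
  (1 / 2 : ℝ) * ‖xi g x‖ ^ 2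

/-- Entry (k, l) of the Hessian of g at x. -/
def hessEntry (g : EuclideanSpace ℝ (Fin d ⊕ Fin d) → ℝ)
    (x : EuclideanSpace ℝ (Fin d ⊕ Fin d)) (k l : Fin d ⊕ Fin d) : ℝ :=
  iteratedFDeriv ℝ 2 g x ![EuclideanSpace.single k 1, EuclideanSpace.single l 1]

/-- The block ∇²_{x1,x1} g(x). -/
def hess11 (g : EuclideanSpace ℝ (Fin d ⊕ Fin d) → ℝ)
    (x : EuclideanSpace ℝ (Fin d ⊕ Fin d)) : Matrix (Fin d) (Fin d) ℝ :=
  Matrix.of fun a b => hessEntry g x (Sum.inl a) (Sum.inl b)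

/-- The cross block ∇²_{x1,x2} g(x). -/
def hess12 (g : EuclideanSpace ℝ (Fin d ⊕ Fin d) → ℝ)
    (x : EuclideanSpace ℝ (Fin d ⊕ Fin d)) : Matrix (Fin d) (Fin d) ℝ :=
  Matrix.of fun a b => hessEntry g x (Sum.inl a) (Sum.inr b)

/-- The block ∇²_{x2,x2} g(x). -/
def hess22 (g : EuclideanSpace ℝ (Fin d ⊕ Fin d) → ℝ)
    (x : EuclideanSpace ℝ (Fin d ⊕ Fin d)) : Matrix (Fin d) (Fin d) ℝ :=
  Matrix.of fun a b => hessEntry g x (Sum.inr a) (Sum.inr b)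

open Matrix

lemma ham_eq (g : EuclideanSpace ℝ (Fin d ⊕ Fin d) → ℝ) (x : EuclideanSpace ℝ (Fin d ⊕ Fin d)) :
    Ham g x = (1/2 : ℝ) * ‖gradient g x‖ ^ 2 := by
  have : ‖xi g x‖ = ‖gradient g x‖ := by
    simp only [EuclideanSpace.norm_eq]
    congr 1
    rw [Fintype.sum_sum_type, Fintype.sum_sum_type]
    simp [xi, WithLp.equiv, Equiv.refl]
  rw [Ham, this]

lemma grad_ham (g : EuclideanSpace ℝ (Fin d ⊕ Fin d) → ℝ) (hg : ContDiff ℝ 2 g)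
    (x : EuclideanSpace ℝ (Fin d ⊕ Fin d)) (k : Fin d ⊕ Fin d) :
    gradient (Ham g) x k = ∑ l, hessEntry g x k l * gradient g x l := by
  classical
  set f : EuclideanSpace ℝ (Fin d ⊕ Fin d) → EuclideanSpace ℝ (Fin d ⊕ Fin d) := fun y => gradient g y with hf
  have hdf : ContDiff ℝ 1 (fderiv ℝ g) := hg.fderiv_right (by norm_num)
  have hfd : HasFDerivAt (fderiv ℝ g) (fderiv ℝ (fderiv ℝ g) x) x :=
    ((hdf.differentiable (by norm_num)) x).hasFDerivAt
  set e : (EuclideanSpace ℝ (Fin d ⊕ Fin d) →L[ℝ] ℝ) →L[ℝ] EuclideanSpace ℝ (Fin d ⊕ Fin d) :=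
    (InnerProductSpace.toDual ℝ (EuclideanSpace ℝ (Fin d ⊕ Fin d))).symm.toContinuousLinearEquiv.toContinuousLinearMap with he
  have hfeq : f = fun y => e (fderiv ℝ g y) := by
    funext y; simp [hf, he, gradient]
  have hf' : HasFDerivAt f (e.comp (fderiv ℝ (fderiv ℝ g) x)) x := by
    rw [hfeq]; exact (e.hasFDerivAt).comp x hfd
  set f' := e.comp (fderiv ℝ (fderiv ℝ g) x) with hf'def
  have hham : Ham g = fun y => (1/2 : ℝ) * ⟪f y, f y⟫ := by
    funext y; rw [ham_eq, real_inner_self_eq_norm_sq]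
  have hD : HasFDerivAt (Ham g)
      ((1/2 : ℝ) • ((fderivInnerCLM ℝ (f x, f x)).comp (f'.prod f'))) x := by
    rw [hham]
    exact (hf'.inner ℝ hf').const_mul (1/2 : ℝ)
  have hgradval : gradient (Ham g) x =
      (InnerProductSpace.toDual ℝ (EuclideanSpace ℝ (Fin d ⊕ Fin d))).symm
        ((1/2 : ℝ) • ((fderivInnerCLM ℝ (f x, f x)).comp (f'.prod f'))) := by
    rw [gradient, hD.fderiv]
  have key : ∀ (ψ : EuclideanSpace ℝ (Fin d ⊕ Fin d) →L[ℝ] ℝ)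
      (z : EuclideanSpace ℝ (Fin d ⊕ Fin d)),
      ψ z = ∑ l, z l * ψ (EuclideanSpace.single l 1) := by
    intro ψ z
    conv_lhs => rw [← OrthonormalBasis.sum_repr (EuclideanSpace.basisFun (Fin d ⊕ Fin d) ℝ) z]
    rw [map_sum]
    simp [EuclideanSpace.basisFun_apply, EuclideanSpace.basisFun_repr, smul_eq_mul]
  have h1 : (gradient (Ham g) x) k = ⟪gradient (Ham g) x, EuclideanSpace.single k 1⟫ := by
    rw [EuclideanSpace.inner_single_right]; simp
  rw [h1, hgradval, InnerProductSpace.toDual_symm_apply]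
  have h2 : ((1/2 : ℝ) • ((fderivInnerCLM ℝ (f x, f x)).comp (f'.prod f')))
      (EuclideanSpace.single k 1)
      = ⟪f x, f' (EuclideanSpace.single k 1)⟫ := by
    rw [ContinuousLinearMap.smul_apply, ContinuousLinearMap.comp_apply,
      ContinuousLinearMap.prod_apply, fderivInnerCLM_apply,
      real_inner_comm (f' (EuclideanSpace.single k 1)) (f x)]
    rw [smul_eq_mul]; ring
  rw [h2]
  have h3 : ⟪f x, f' (EuclideanSpace.single k 1)⟫
      = (fderiv ℝ (fderiv ℝ g) x (EuclideanSpace.single k 1)) (f x) := by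
    rw [real_inner_comm, hf'def]
    exact InnerProductSpace.toDual_symm_apply
  rw [h3, key]
  refine Finset.sum_congr rfl fun l _ => ?_
  rw [hessEntry, iteratedFDeriv_two_apply]
  simp [hf, mul_comm]

lemma hess_symm (g : EuclideanSpace ℝ (Fin d ⊕ Fin d) → ℝ) (hg : ContDiff ℝ 2 g)
    (x : EuclideanSpace ℝ (Fin d ⊕ Fin d)) (k l : Fin d ⊕ Fin d) :
    hessEntry g x k l = hessEntry g x l k := by
  have hs := hg.contDiffAt.isSymmSndFDerivAt (x := x) (by norm_num)
  rw [hessEntry, hessEntry, iteratedFDeriv_two_apply, iteratedFDeriv_two_apply]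
  simpa using hs (EuclideanSpace.single k 1) (EuclideanSpace.single l 1)
open Matrix

lemma tEL_apply (M : Matrix (Fin d) (Fin d) ℝ) (w : EuclideanSpace ℝ (Fin d)) (a : Fin d) :
    Matrix.toEuclideanLin M w a = ∑ b, M a b * w b := by
  rw [Matrix.toEuclideanLin_apply]
  show Matrix.mulVec M _ a = _
  rw [Matrix.mulVec, dotProduct]

lemma normsq {n : Type*} [Fintype n] (w : EuclideanSpace ℝ n) : ‖w‖ ^ 2 = ∑ i, w i ^ 2 := by
  rw [EuclideanSpace.norm_eq, Real.sq_sqrt (by positivity)]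
  simp [sq_abs]

lemma adj_rel (M : Matrix (Fin d) (Fin d) ℝ) (w z : EuclideanSpace ℝ (Fin d)) :
    ⟪Matrix.toEuclideanLin Mᵀ w, z⟫ = ⟪w, Matrix.toEuclideanLin M z⟫ := by
  simp only [PiLp.inner_apply, RCLike.inner_apply, starRingEnd_apply, star_trivial,
    tEL_apply, Matrix.transpose_apply, Finset.sum_mul, Finset.mul_sum]
  rw [Finset.sum_comm]
  exact Finset.sum_congr rfl fun j _ => Finset.sum_congr rfl fun b _ => by ring

lemma transpose_upper (M : Matrix (Fin d) (Fin d) ℝ) (Δ : ℝ)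
    (hup : ∀ v : EuclideanSpace ℝ (Fin d), ‖Matrix.toEuclideanLin M v‖ ≤ Δ * ‖v‖)
    (u : EuclideanSpace ℝ (Fin d)) : ‖Matrix.toEuclideanLin Mᵀ u‖ ≤ Δ * ‖u‖ := by
  set t := Matrix.toEuclideanLin Mᵀ u with ht
  rcases eq_or_ne ‖t‖ 0 with h | h
  · rw [h]
    have h0 : (0:ℝ) ≤ ‖Matrix.toEuclideanLin M u‖ := norm_nonneg _
    nlinarith [hup u, norm_nonneg u]
  · have h1 : ‖t‖ ^ 2 = ⟪u, Matrix.toEuclideanLin M t⟫ := by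
      rw [← adj_rel, real_inner_self_eq_norm_sq]
    have h2 : ⟪u, Matrix.toEuclideanLin M t⟫ ≤ ‖u‖ * (Δ * ‖t‖) :=
      le_trans (real_inner_le_norm _ _) (by
        exact mul_le_mul_of_nonneg_left (hup t) (norm_nonneg u))
    have h3 : ‖t‖ * ‖t‖ ≤ (Δ * ‖u‖) * ‖t‖ := by nlinarith
    exact le_of_mul_le_mul_right (by nlinarith) (lt_of_le_of_ne (norm_nonneg t) (Ne.symm h))

lemma transpose_lower (M : Matrix (Fin d) (Fin d) ℝ) (δ : ℝ) (hδ : 0 < δ)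
    (hlow : ∀ v : EuclideanSpace ℝ (Fin d), δ * ‖v‖ ≤ ‖Matrix.toEuclideanLin M v‖)
    (u : EuclideanSpace ℝ (Fin d)) : δ * ‖u‖ ≤ ‖Matrix.toEuclideanLin Mᵀ u‖ := by
  have hinj : Function.Injective (Matrix.toEuclideanLin M) := by
    rw [← LinearMap.ker_eq_bot, LinearMap.ker_eq_bot']
    intro v hv
    have := hlow v
    rw [hv, norm_zero] at this
    have : ‖v‖ = 0 := le_antisymm (by nlinarith) (norm_nonneg v)
    simpa using this
  have hsurj : Function.Surjective (Matrix.toEuclideanLin M) :=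
    LinearMap.injective_iff_surjective.mp hinj
  obtain ⟨w, hw⟩ := hsurj u
  rcases eq_or_ne ‖u‖ 0 with h | h
  · rw [h, mul_zero]; exact norm_nonneg _
  · have h1 : ‖u‖ ^ 2 = ⟪Matrix.toEuclideanLin Mᵀ u, w⟫ := by
      rw [adj_rel, hw, real_inner_self_eq_norm_sq]
    have h2 : ⟪Matrix.toEuclideanLin Mᵀ u, w⟫ ≤ ‖Matrix.toEuclideanLin Mᵀ u‖ * ‖w‖ :=
      real_inner_le_norm _ _
    have h3 : δ * ‖w‖ ≤ ‖u‖ := by rw [← hw]; exact hlow w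
    have hu : 0 < ‖u‖ := lt_of_le_of_ne (norm_nonneg u) (Ne.symm h)
    have hw0 : 0 ≤ ‖w‖ := norm_nonneg w
    have ht0 : 0 ≤ ‖Matrix.toEuclideanLin Mᵀ u‖ := norm_nonneg _
    nlinarith

lemma cross_lb (A B : EuclideanSpace ℝ (Fin d) →ₗ[ℝ] EuclideanSpace ℝ (Fin d))
    (u v : EuclideanSpace ℝ (Fin d)) (ρ δ L Δ : ℝ) (hρ : 0 ≤ ρ) (hδ : 0 ≤ δ)
    (hA1 : ρ * ‖u‖ ≤ ‖A u‖) (hA2 : ‖A u‖ ≤ L * ‖u‖)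
    (hB1 : δ * ‖v‖ ≤ ‖B v‖) (hB2 : ‖B v‖ ≤ Δ * ‖v‖) :
    ρ^2 * ‖u‖^2 + δ^2 * ‖v‖^2 - 2 * L * Δ * (‖u‖ * ‖v‖) ≤ ‖A u + B v‖^2 := by
  have e1 : ‖A u + B v‖^2 = ‖A u‖^2 + 2 * ⟪A u, B v⟫ + ‖B v‖^2 := by
    rw [← real_inner_self_eq_norm_sq, ← real_inner_self_eq_norm_sq, ← real_inner_self_eq_norm_sq,
      inner_add_add_self, real_inner_comm (B v) (A u)]
    ring
  have e2 : -(‖A u‖ * ‖B v‖) ≤ ⟪A u, B v⟫ := neg_le_of_neg_le (by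
    simpa using (real_inner_le_norm (A u) (-(B v))).trans (by simp))
  have e3 : ‖A u‖ * ‖B v‖ ≤ (L * ‖u‖) * (Δ * ‖v‖) :=
    mul_le_mul hA2 hB2 (norm_nonneg _) (le_trans (norm_nonneg _) hA2)
  have hA1' : ρ^2 * ‖u‖^2 ≤ ‖A u‖^2 := by nlinarith [mul_self_le_mul_self (mul_nonneg hρ (norm_nonneg u)) hA1]
  have hB1' : δ^2 * ‖v‖^2 ≤ ‖B v‖^2 := by nlinarith [mul_self_le_mul_self (mul_nonneg hδ (norm_nonneg v)) hB1]
  have e4 : -((L * ‖u‖) * (Δ * ‖v‖)) ≤ ⟪A u, B v⟫ := le_trans (by linarith) e2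
  rw [e1]; nlinarith

set_option maxHeartbeats 1000000 in
theorem sufficiently_bilinear_PL
    (g : EuclideanSpace ℝ (Fin d ⊕ Fin d) → ℝ) (hg : ContDiff ℝ 2 g)
    (δ Δ L ρ β : ℝ) (hδ : 0 < δ) (hΔ : 0 < Δ) (hL : 0 < L) (hρ : 0 ≤ ρ) (hβ : 0 ≤ β)
    -- all singular values of the cross block lie in [δ, Δ]
    (hCross : ∀ x (v : EuclideanSpace ℝ (Fin d)),
      δ * ‖v‖ ≤ ‖Matrix.toEuclideanLin (hess12 g x) v‖ ∧
      ‖Matrix.toEuclideanLin (hess12 g x) v‖ ≤ Δ * ‖v‖)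
    -- spectral norms of the diagonal blocks are at most L
    (h11L : ∀ x (v : EuclideanSpace ℝ (Fin d)),
      ‖Matrix.toEuclideanLin (hess11 g x) v‖ ≤ L * ‖v‖)
    (h22L : ∀ x (v : EuclideanSpace ℝ (Fin d)),
      ‖Matrix.toEuclideanLin (hess22 g x) v‖ ≤ L * ‖v‖)
    -- λ_min((∇²_{x1,x1} g)²) ≥ ρ² and λ_min((∇²_{x2,x2} g)²) ≥ β²
    (h11ρ : ∀ x (v : EuclideanSpace ℝ (Fin d)),
      ρ * ‖v‖ ≤ ‖Matrix.toEuclideanLin (hess11 g x) v‖)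
    (h22β : ∀ x (v : EuclideanSpace ℝ (Fin d)),
      β * ‖v‖ ≤ ‖Matrix.toEuclideanLin (hess22 g x) v‖)
    -- the "sufficiently bilinear" condition
    (hsuff : (δ ^ 2 + ρ ^ 2) * (δ ^ 2 + β ^ 2) - 4 * L ^ 2 * Δ ^ 2 > 0) :
    ∀ x, ((δ ^ 2 + ρ ^ 2) * (δ ^ 2 + β ^ 2) - 4 * L ^ 2 * Δ ^ 2)
        / (2 * δ ^ 2 + ρ ^ 2 + β ^ 2) * Ham g x
      ≤ (1 / 2 : ℝ) * ‖gradient (Ham g) x‖ ^ 2 := by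
  intro x
  set u : EuclideanSpace ℝ (Fin d) :=
    (WithLp.equiv 2 _).symm (fun a => gradient g x (Sum.inl a)) with hu
  set v : EuclideanSpace ℝ (Fin d) :=
    (WithLp.equiv 2 _).symm (fun j => gradient g x (Sum.inr j)) with hv
  have hua : ∀ a, u a = gradient g x (Sum.inl a) := fun a => rfl
  have hva : ∀ j, v j = gradient g x (Sum.inr j) := fun j => rfl
  set X : EuclideanSpace ℝ (Fin d) :=
    Matrix.toEuclideanLin (hess11 g x) u + Matrix.toEuclideanLin (hess12 g x) v with hX
  set Y : EuclideanSpace ℝ (Fin d) :=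
    Matrix.toEuclideanLin (hess12 g x)ᵀ u + Matrix.toEuclideanLin (hess22 g x) v with hY
  have hXa : ∀ a, X a = gradient (Ham g) x (Sum.inl a) := by
    intro a
    rw [grad_ham g hg x (Sum.inl a), Fintype.sum_sum_type]
    have : X a = (Matrix.toEuclideanLin (hess11 g x) u) a
        + (Matrix.toEuclideanLin (hess12 g x) v) a := rfl
    rw [this, tEL_apply, tEL_apply]
    exact congrArg₂ (· + ·) (Finset.sum_congr rfl fun b _ => rfl)
      (Finset.sum_congr rfl fun b _ => rfl)
  have hYa : ∀ j, Y j = gradient (Ham g) x (Sum.inr j) := by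
    intro j
    rw [grad_ham g hg x (Sum.inr j), Fintype.sum_sum_type]
    have : Y j = (Matrix.toEuclideanLin (hess12 g x)ᵀ u) j
        + (Matrix.toEuclideanLin (hess22 g x) v) j := rfl
    rw [this, tEL_apply, tEL_apply]
    refine congrArg₂ (· + ·) ?_ (Finset.sum_congr rfl fun b _ => rfl)
    refine Finset.sum_congr rfl fun b _ => ?_
    rw [hua b, Matrix.transpose_apply]
    rw [show (hess12 g x) b j = hessEntry g x (Sum.inl b) (Sum.inr j) from rfl,
      ← hess_symm g hg x (Sum.inr j) (Sum.inl b)]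
  have hnorm : ‖gradient (Ham g) x‖ ^ 2 = ‖X‖ ^ 2 + ‖Y‖ ^ 2 := by
    rw [normsq, normsq, normsq, Fintype.sum_sum_type]
    congr 1
    · exact Finset.sum_congr rfl fun a _ => by rw [hXa a]
    · exact Finset.sum_congr rfl fun j _ => by rw [hYa j]
  have hham : Ham g x = (1/2 : ℝ) * (‖u‖ ^ 2 + ‖v‖ ^ 2) := by
    rw [ham_eq, normsq, normsq, normsq, Fintype.sum_sum_type]
    exact congrArg ((1/2 : ℝ) * ·) (congrArg₂ (· + ·)
      (Finset.sum_congr rfl fun a _ => rfl) (Finset.sum_congr rfl fun j _ => rfl))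
  have hXlb : ρ^2 * ‖u‖^2 + δ^2 * ‖v‖^2 - 2 * L * Δ * (‖u‖ * ‖v‖) ≤ ‖X‖^2 :=
    cross_lb _ _ u v ρ δ L Δ hρ hδ.le (h11ρ x u) (h11L x u) (hCross x v).1 (hCross x v).2
  have hYlb : δ^2 * ‖u‖^2 + β^2 * ‖v‖^2 - 2 * Δ * L * (‖u‖ * ‖v‖) ≤ ‖Y‖^2 :=
    cross_lb _ _ u v δ β Δ L hδ.le hβ
      (transpose_lower _ δ hδ (fun w => (hCross x w).1) u)
      (transpose_upper _ Δ (fun w => (hCross x w).2) u)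
      (h22β x v) (h22L x v)
  have hpq : (0:ℝ) < 2 * δ^2 + ρ^2 + β^2 := by positivity
  rw [hham, hnorm, div_mul_eq_mul_div, div_le_iff₀ hpq]
  have key : ((δ^2+ρ^2)*(δ^2+β^2) - 4*L^2*Δ^2) * (‖u‖^2+‖v‖^2)
      ≤ ((δ^2+ρ^2)*‖u‖^2 + (δ^2+β^2)*‖v‖^2 - 4*L*Δ*(‖u‖*‖v‖)) * (2*δ^2+ρ^2+β^2) := by
    nlinarith [sq_nonneg ((δ^2+ρ^2)*‖u‖ - 2*L*Δ*‖v‖), sq_nonneg (2*L*Δ*‖u‖ - (δ^2+β^2)*‖v‖)]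
  have hsum : (δ^2+ρ^2)*‖u‖^2 + (δ^2+β^2)*‖v‖^2 - 4*L*Δ*(‖u‖*‖v‖) ≤ ‖X‖^2 + ‖Y‖^2 := by
    linarith [add_le_add hXlb hYlb]
  have hfin : ((δ^2+ρ^2)*(δ^2+β^2) - 4*L^2*Δ^2) * (‖u‖^2+‖v‖^2)
      ≤ (‖X‖^2 + ‖Y‖^2) * (2*δ^2+ρ^2+β^2) :=
    key.trans (mul_le_mul_of_nonneg_right hsum hpq.le)
  linarith [hfin]

end
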